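/- arXiv:2005.08632 — 2 statements merged into one kernel-verified Lean document; each statement's English description precedes it below -/
import Mathlib

section
/- Let μ be a probability measure on ℝ^d, let f : ℝ^d → Fin k be a classifier, and let A : ℝ^d → ℝ^d be an attack map with A(x) ≠ 0 for all x and ε := sup_x ‖A(x)‖ < ∞. Let v be a unit eigenvector of M = E[(A(X)/‖A(X)‖)(A(X)/‖A(X)‖)ᵀ] with top eigenvalue λ, and fix 0 < δ < 1 with δ² < λ. Assume that for every x with f(x + A(x)) ≠ f(x) and every z with ⟨z, A(x)⟩ ≥ ‖A(x)‖², we have f(x + z) ≠ f(x). Then with u = (ε/δ)v, P[f(X + u) ≠ f(X) or f(X − u) ≠ f(X)] ≥ P[f(X + A(X)) ≠ f(X)] − (1 − λ)/(1 − δ²). -/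
open MeasureTheory RealInnerProductSpace

theorem stmt2 {d k : ℕ} (μ : Measure (EuclideanSpace ℝ (Fin d))) [IsProbabilityMeasure μ]
    (f : EuclideanSpace ℝ (Fin d) → Fin k)
    (A : EuclideanSpace ℝ (Fin d) → EuclideanSpace ℝ (Fin d))
    (hA : ∀ x, A x ≠ 0)
    (ε : ℝ) (hεdef : ε = ⨆ x, ‖A x‖) (hbdd : ∀ x, ‖A x‖ ≤ ε)
    (v : EuclideanSpace ℝ (Fin d)) (hv : ‖v‖ = 1)
    (lam : ℝ) (hlam : lam = ∫ x, (⟪‖A x‖⁻¹ • A x, v⟫) ^ 2 ∂μ)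
    (δ : ℝ) (hδ0 : 0 < δ) (hδ1 : δ < 1) (hdlam : δ ^ 2 < lam)
    (hhalf : ∀ x, f (x + A x) ≠ f x →
      ∀ z, ‖A x‖ ^ 2 ≤ ⟪z, A x⟫ → f (x + z) ≠ f x) :
    (μ {x | f (x + A x) ≠ f x}).toReal - (1 - lam) / (1 - δ ^ 2) ≤
      (μ {x | f (x + (ε / δ) • v) ≠ f x ∨ f (x - (ε / δ) • v) ≠ f x}).toReal := by
  set g : EuclideanSpace ℝ (Fin d) → ℝ := fun x => ⟪‖A x‖⁻¹ • A x, v⟫ with hg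
  have hAx : ∀ x, (0:ℝ) < ‖A x‖ := fun x => norm_pos_iff.mpr (hA x)
  have hε : (0:ℝ) < ε := lt_of_lt_of_le (hAx 0) (hbdd 0)
  -- |g x| ≤ 1
  have hg1 : ∀ x, |g x| ≤ 1 := by
    intro x
    have := abs_real_inner_le_norm (‖A x‖⁻¹ • A x) v
    rw [hv, mul_one, norm_smul, norm_inv, norm_norm,
      inv_mul_cancel₀ (hAx x).ne'] at this
    exact this
  have hgsq : ∀ x, g x ^ 2 ≤ 1 := by
    intro x
    have := hg1 x
    nlinarith [abs_nonneg (g x), sq_abs (g x)]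
  -- integrability of g^2
  have hint : Integrable (fun x => g x ^ 2) μ := by
    by_contra h
    rw [integral_undef h] at hlam
    nlinarith
  -- the bad set
  set B : Set (EuclideanSpace ℝ (Fin d)) := {x | g x ^ 2 < δ ^ 2} with hB
  set T : Set (EuclideanSpace ℝ (Fin d)) :=
    {x | f (x + (ε / δ) • v) ≠ f x ∨ f (x - (ε / δ) • v) ≠ f x} with hT
  -- inclusion
  have hsub : {x | f (x + A x) ≠ f x} ⊆ T ∪ B := by
    intro x hx
    by_cases hxB : x ∈ B
    · exact Or.inr hxB
    · left
      have hδg : δ ≤ |g x| := by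
        simp only [hB, Set.mem_setOf_eq, not_lt] at hxB
        nlinarith [abs_nonneg (g x), sq_abs (g x)]
      have hinner : ⟪v, A x⟫ = ‖A x‖ * g x := by
        rw [real_inner_comm, hg]
        simp only
        rw [real_inner_smul_left, mul_inv_cancel_left₀ (hAx x).ne']
      rcases le_abs.mp hδg with h1 | h1
      · refine Or.inl (hhalf x hx _ ?_)
        rw [real_inner_smul_left, hinner]
        have key : ε / δ * (‖A x‖ * δ) ≤ ε / δ * (‖A x‖ * g x) :=
          mul_le_mul_of_nonneg_left
            (mul_le_mul_of_nonneg_left h1 (norm_nonneg _))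
            (div_nonneg hε.le hδ0.le)
        have e1 : ε / δ * (‖A x‖ * δ) = ε * ‖A x‖ := by
          field_simp
        nlinarith [hbdd x, hAx x]
      · refine Or.inr ?_
        rw [sub_eq_add_neg]
        refine hhalf x hx _ ?_
        rw [inner_neg_left, real_inner_smul_left, hinner]
        have key : ε / δ * (‖A x‖ * δ) ≤ ε / δ * (‖A x‖ * -g x) :=
          mul_le_mul_of_nonneg_left
            (mul_le_mul_of_nonneg_left h1 (norm_nonneg _))
            (div_nonneg hε.le hδ0.le)
        have e1 : ε / δ * (‖A x‖ * δ) = ε * ‖A x‖ := by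
          field_simp
        nlinarith [hbdd x, hAx x]
  -- Markov bound on B
  have hδsq : (0:ℝ) < 1 - δ ^ 2 := by nlinarith
  have hFint : Integrable (fun x => 1 - g x ^ 2) μ :=
    (integrable_const 1).sub hint
  have hmarkov := mul_meas_ge_le_integral_of_nonneg
    (f := fun x => 1 - g x ^ 2)
    (Filter.Eventually.of_forall fun x => by simp only [Pi.zero_apply]; nlinarith [hgsq x]) hFint (1 - δ ^ 2)
  have hlam' : lam = ∫ x, g x ^ 2 ∂μ := hlam
  have hFval : ∫ x, (1 - g x ^ 2) ∂μ = 1 - lam := by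
    rw [integral_sub (integrable_const 1) hint, integral_const, hlam']
    norm_num
  rw [hFval] at hmarkov
  have hBsub : B ⊆ {x | 1 - δ ^ 2 ≤ 1 - g x ^ 2} := by
    intro x hx
    simp only [hB, Set.mem_setOf_eq] at hx ⊢
    linarith
  have hBbound : (μ B).toReal ≤ (1 - lam) / (1 - δ ^ 2) := by
    rw [le_div_iff₀ hδsq]
    calc (μ B).toReal * (1 - δ ^ 2)
        ≤ (μ {x | 1 - δ ^ 2 ≤ 1 - g x ^ 2}).toReal * (1 - δ ^ 2) :=
          mul_le_mul_of_nonneg_right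
            (ENNReal.toReal_mono (measure_ne_top μ _) (measure_mono hBsub)) hδsq.le
      _ ≤ 1 - lam := by rw [mul_comm]; exact hmarkov
  -- combine
  have hμS : (μ {x | f (x + A x) ≠ f x}).toReal ≤ (μ T).toReal + (μ B).toReal := by
    have h1 : μ {x | f (x + A x) ≠ f x} ≤ μ T + μ B :=
      le_trans (measure_mono hsub) (measure_union_le T B)
    have h2 := ENNReal.toReal_mono
      (by simp [ENNReal.add_ne_top, measure_ne_top]) h1
    rwa [ENNReal.toReal_add (measure_ne_top μ T) (measure_ne_top μ B)] at h2
  linarith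
end

section
/- Let A and B be real symmetric d×d matrices such that the top eigenvalue of A is separated from the second: λ_1(A) − λ_2(A) ≥ γ > 0. Let v and w be unit top eigenvectors of A and B respectively. Then there exists a sign s ∈ {−1, 1} such that ‖v − s·w‖ ≤ 2^{3/2}·‖A − B‖/γ. (Davis–Kahan corollary.) -/
set_option maxHeartbeats 1000000


open scoped Matrix.Norms.L2Operator
open scoped InnerProductSpace

lemma dk_eigen {d : ℕ} {A : Matrix (Fin d) (Fin d) ℝ} (hA : A.IsHermitian) (j : Fin d) :
    Matrix.toEuclideanLin A (hA.eigenvectorBasis j) =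
      hA.eigenvalues j • hA.eigenvectorBasis j := by
  rw [Matrix.toEuclideanLin_apply]
  exact congrArg (WithLp.equiv 2 (Fin d → ℝ)).symm (hA.mulVec_eigenvectorBasis j)

lemma dk_inner_eigen {d : ℕ} {A : Matrix (Fin d) (Fin d) ℝ} (hA : A.IsHermitian) (j : Fin d)
    (x : EuclideanSpace ℝ (Fin d)) :
    ⟪hA.eigenvectorBasis j, Matrix.toEuclideanLin A x⟫_ℝ
      = hA.eigenvalues j * ⟪hA.eigenvectorBasis j, x⟫_ℝ := by
  rw [← (Matrix.isHermitian_iff_isSymmetric.mp hA) _ x, dk_eigen hA j,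
    real_inner_smul_left]

lemma dk_inner_self {d : ℕ} (x y : EuclideanSpace ℝ (Fin d))
    (b : OrthonormalBasis (Fin d) ℝ (EuclideanSpace ℝ (Fin d))) :
    ⟪x, y⟫_ℝ = ∑ i, ⟪b i, x⟫_ℝ * ⟪b i, y⟫_ℝ := by
  rw [← b.sum_inner_mul_inner x y]
  exact Finset.sum_congr rfl fun i _ => by rw [real_inner_comm x (b i)]

lemma dk_rayleigh {d : ℕ} {A : Matrix (Fin d) (Fin d) ℝ} (hA : A.IsHermitian)
    (x : EuclideanSpace ℝ (Fin d)) {L : ℝ} (hL : ∀ i, hA.eigenvalues i ≤ L) :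
    ⟪x, Matrix.toEuclideanLin A x⟫_ℝ ≤ L * ‖x‖ ^ 2 := by
  rw [dk_inner_self x _ hA.eigenvectorBasis]
  have : L * ‖x‖ ^ 2 = ∑ i, L * ⟪hA.eigenvectorBasis i, x⟫_ℝ ^ 2 := by
    rw [← Finset.mul_sum, ← real_inner_self_eq_norm_sq,
      dk_inner_self x x hA.eigenvectorBasis]
    simp [sq]
  rw [this]
  refine Finset.sum_le_sum fun i _ => ?_
  rw [dk_inner_eigen hA i x]
  have := sq_nonneg (⟪hA.eigenvectorBasis i, x⟫_ℝ)
  nlinarith [hL i]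

lemma dk_opnorm {d : ℕ} (M : Matrix (Fin d) (Fin d) ℝ) (x : EuclideanSpace ℝ (Fin d)) :
    ‖Matrix.toEuclideanLin M x‖ ≤ ‖M‖ * ‖x‖ :=
  M.l2_opNorm_mulVec x

theorem stmt7 {d : ℕ} (hd : 1 < d) (A B : Matrix (Fin d) (Fin d) ℝ)
    (hA : A.IsHermitian) (hB : B.IsHermitian)
    (lamA lamB : Fin d → ℝ) (hAsort : Antitone lamA) (hBsort : Antitone lamB)
    (hA' : ∃ σ : Equiv.Perm (Fin d), lamA = hA.eigenvalues ∘ σ)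
    (hB' : ∃ τ : Equiv.Perm (Fin d), lamB = hB.eigenvalues ∘ τ)
    (γ : ℝ) (hγ : 0 < γ)
    (hgap : γ ≤ lamA ⟨0, by omega⟩ - lamA ⟨1, by omega⟩)
    (v w : EuclideanSpace ℝ (Fin d)) (hv : ‖v‖ = 1) (hw : ‖w‖ = 1)
    (hvA : Matrix.toEuclideanLin A v = lamA ⟨0, by omega⟩ • v)
    (hwB : Matrix.toEuclideanLin B w = lamB ⟨0, by omega⟩ • w) :
    ∃ s : ℝ, (s = 1 ∨ s = -1) ∧
      ‖v - s • w‖ ≤ 2 ^ ((3 : ℝ) / 2) * ‖A - B‖ / γ := by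
  obtain ⟨σ, hσ⟩ := hA'
  obtain ⟨τ, hτ⟩ := hB'
  set b := hA.eigenvectorBasis with hb
  set μ := hA.eigenvalues with hμdef
  set t := ‖A - B‖ with ht
  have ht0 : 0 ≤ t := norm_nonneg _
  set z0 : Fin d := ⟨0, by omega⟩ with hz0
  set z1 : Fin d := ⟨1, by omega⟩ with hz1
  -- eigenvalues of A as lamA of permuted index
  have hμlam : ∀ i, μ i = lamA (σ.symm i) := by
    intro i
    rw [hσ]; simp
  have hνlam : ∀ i, hB.eigenvalues i = lamB (τ.symm i) := by
    intro i
    rw [hτ]; simp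
  have hμ_le : ∀ i, μ i ≤ lamA z0 := fun i => by
    rw [hμlam i]; exact hAsort (by simp [hz0, Fin.le_def])
  have hν_le : ∀ i, hB.eigenvalues i ≤ lamB z0 := fun i => by
    rw [hνlam i]; exact hBsort (by simp [hz0, Fin.le_def])
  set i0 : Fin d := σ z0 with hi0
  have hμi0 : μ i0 = lamA z0 := by rw [hμlam]; simp [hi0]
  have hgap' : ∀ i, i ≠ i0 → μ i ≤ lamA z0 - γ := by
    intro i hi
    have h1 : σ.symm i ≠ z0 := by
      intro h
      exact hi (by rw [hi0, ← h]; simp)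
    have h2 : z1 ≤ σ.symm i := by
      have := Fin.val_ne_of_ne h1
      simp only [hz0] at this
      simp [hz1, Fin.le_def]; omega
    have := hAsort h2
    rw [hμlam i]
    linarith [hgap]
  -- v is supported on coordinate i0
  have hv_supp : ∀ i, i ≠ i0 → ⟪b i, v⟫_ℝ = 0 := by
    intro i hi
    have h1 : ⟪b i, Matrix.toEuclideanLin A v⟫_ℝ = μ i * ⟪b i, v⟫_ℝ :=
      dk_inner_eigen hA i v
    rw [hvA, real_inner_smul_right] at h1
    have h2 := hgap' i hi
    have : (lamA z0 - μ i) * ⟪b i, v⟫_ℝ = 0 := by linarith [h1]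
    rcases mul_eq_zero.mp this with h | h
    · exfalso; linarith
    · exact h
  have hvv : ⟪b i0, v⟫_ℝ ^ 2 = 1 := by
    have h1 : ⟪v, v⟫_ℝ = 1 := by
      rw [real_inner_self_eq_norm_sq, hv]; norm_num
    rw [dk_inner_self v v b] at h1
    rw [← h1]
    rw [Finset.sum_eq_single i0 (fun i _ hi => by rw [hv_supp i hi]; ring)
      (fun h => absurd (Finset.mem_univ i0) h)]
    ring
  have habs_v : |⟪b i0, v⟫_ℝ| = 1 := by
    rw [← Real.sqrt_sq_eq_abs, hvv, Real.sqrt_one]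
  set c : Fin d → ℝ := fun i => ⟪b i, w⟫_ℝ with hc
  have hw2 : ∑ i, c i ^ 2 = 1 := by
    have h1 : ⟪w, w⟫_ℝ = 1 := by
      rw [real_inner_self_eq_norm_sq, hw]; norm_num
    rw [dk_inner_self w w b] at h1
    rw [← h1]
    exact Finset.sum_congr rfl fun i _ => by rw [sq]
  have hvw : ⟪v, w⟫_ℝ = ⟪b i0, v⟫_ℝ * c i0 := by
    rw [dk_inner_self v w b]
    exact Finset.sum_eq_single i0 (fun i _ hi => by rw [hv_supp i hi]; ring)
      (fun h => absurd (Finset.mem_univ i0) h)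
  -- Rayleigh / eigenvalue closeness
  have hAv : ⟪v, Matrix.toEuclideanLin A v⟫_ℝ = lamA z0 := by
    rw [hvA, real_inner_smul_right, real_inner_self_eq_norm_sq, hv]; ring
  have hBw : ⟪w, Matrix.toEuclideanLin B w⟫_ℝ = lamB z0 := by
    rw [hwB, real_inner_smul_right, real_inner_self_eq_norm_sq, hw]; ring
  have hABle : ∀ x : EuclideanSpace ℝ (Fin d), ‖x‖ = 1 →
      |⟪x, Matrix.toEuclideanLin A x⟫_ℝ - ⟪x, Matrix.toEuclideanLin B x⟫_ℝ| ≤ t := by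
    intro x hx
    have h1 : ⟪x, Matrix.toEuclideanLin A x⟫_ℝ - ⟪x, Matrix.toEuclideanLin B x⟫_ℝ
        = ⟪x, Matrix.toEuclideanLin (A - B) x⟫_ℝ := by
      rw [map_sub]
      simp [inner_sub_right]
    rw [h1]
    calc |⟪x, Matrix.toEuclideanLin (A - B) x⟫_ℝ|
        ≤ ‖x‖ * ‖Matrix.toEuclideanLin (A - B) x‖ := abs_real_inner_le_norm _ _
      _ ≤ ‖x‖ * (‖A - B‖ * ‖x‖) := by
          gcongr
          exact dk_opnorm _ _
      _ = t := by rw [hx, ht]; ring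
  have hclose : |lamA z0 - lamB z0| ≤ t := by
    have h1 : ⟪v, Matrix.toEuclideanLin B v⟫_ℝ ≤ lamB z0 := by
      have := dk_rayleigh hB v hν_le
      rwa [hv, one_pow, mul_one] at this
    have h2 : ⟪w, Matrix.toEuclideanLin A w⟫_ℝ ≤ lamA z0 := by
      have := dk_rayleigh hA w hμ_le
      rwa [hw, one_pow, mul_one] at this
    have h3 := hABle v hv
    have h4 := hABle w hw
    rw [abs_le] at h3 h4 ⊢
    constructor <;> [nlinarith [h3.2, h4.1]; nlinarith [h3.1, h4.2]]
  -- the residual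
  set r : EuclideanSpace ℝ (Fin d) := lamA z0 • w - Matrix.toEuclideanLin A w with hr
  have hr_le : ‖r‖ ≤ 2 * t := by
    have hre : r = (lamA z0 - lamB z0) • w + Matrix.toEuclideanLin (B - A) w := by
      rw [hr, map_sub, LinearMap.sub_apply, hwB]
      module
    rw [hre]
    calc ‖(lamA z0 - lamB z0) • w + Matrix.toEuclideanLin (B - A) w‖
        ≤ ‖(lamA z0 - lamB z0) • w‖ + ‖Matrix.toEuclideanLin (B - A) w‖ := norm_add_le _ _
      _ ≤ |lamA z0 - lamB z0| * ‖w‖ + ‖B - A‖ * ‖w‖ := by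
          rw [norm_smul, Real.norm_eq_abs]
          gcongr
          exact dk_opnorm _ _
      _ = |lamA z0 - lamB z0| + ‖B - A‖ := by rw [hw]; ring
      _ ≤ t + t := by
          have : ‖B - A‖ = t := by rw [ht, ← norm_neg]; congr 1; abel
          rw [this]
          gcongr
      _ = 2 * t := by ring
  have hr2 : ‖r‖ ^ 2 = ∑ i, (lamA z0 - μ i) ^ 2 * c i ^ 2 := by
    rw [← real_inner_self_eq_norm_sq, dk_inner_self r r b]
    refine Finset.sum_congr rfl fun i _ => ?_
    have : ⟪b i, r⟫_ℝ = (lamA z0 - μ i) * c i := by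
      rw [hr, inner_sub_right, real_inner_smul_right, dk_inner_eigen hA i w]
      ring
    rw [this]; ring
  -- sum over non-top coordinates
  set S : ℝ := ∑ i ∈ Finset.univ.erase i0, c i ^ 2 with hS
  have hS0 : 0 ≤ S := Finset.sum_nonneg fun i _ => sq_nonneg _
  have hS1 : c i0 ^ 2 + S = 1 := by
    rw [hS, ← hw2]
    exact (Finset.add_sum_erase Finset.univ (fun i => c i ^ 2) (Finset.mem_univ i0))
  have hS2 : γ ^ 2 * S ≤ ‖r‖ ^ 2 := by
    rw [hr2, hS, Finset.mul_sum]
    calc ∑ i ∈ Finset.univ.erase i0, γ ^ 2 * c i ^ 2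
        ≤ ∑ i ∈ Finset.univ.erase i0, (lamA z0 - μ i) ^ 2 * c i ^ 2 := by
          refine Finset.sum_le_sum fun i hi => ?_
          have h1 := hgap' i (Finset.ne_of_mem_erase hi)
          have h2 : γ ≤ lamA z0 - μ i := by linarith
          have : γ ^ 2 ≤ (lamA z0 - μ i) ^ 2 := by nlinarith
          exact mul_le_mul_of_nonneg_right this (sq_nonneg _)
      _ ≤ ∑ i, (lamA z0 - μ i) ^ 2 * c i ^ 2 :=
          Finset.sum_le_sum_of_subset_of_nonneg (Finset.erase_subset _ _)
            (fun i _ _ => mul_nonneg (sq_nonneg _) (sq_nonneg _))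
  have hS3 : γ ^ 2 * S ≤ 4 * t ^ 2 := by
    have := hr_le
    nlinarith [norm_nonneg r]
  -- choose the sign
  refine ⟨if 0 ≤ ⟪v, w⟫_ℝ then 1 else -1, by split <;> simp, ?_⟩
  set s : ℝ := if 0 ≤ ⟪v, w⟫_ℝ then (1:ℝ) else -1 with hsdef
  have hs_abs : s * ⟪v, w⟫_ℝ = |⟪v, w⟫_ℝ| := by
    rw [hsdef]
    split
    · rw [abs_of_nonneg (by assumption)]; ring
    · rw [abs_of_neg (by linarith [lt_of_not_ge (by assumption)])]; ring
  have hs1 : s ^ 2 = 1 := by rw [hsdef]; split <;> norm_num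
  have hvwabs : |⟪v, w⟫_ℝ| = |c i0| := by
    rw [hvw, abs_mul, habs_v, one_mul]
  have hci0 : |c i0| ≤ 1 := by
    have : c i0 ^ 2 ≤ 1 := by linarith
    nlinarith [abs_nonneg (c i0), sq_abs (c i0)]
  have hnorm2 : ‖v - s • w‖ ^ 2 = 2 - 2 * |c i0| := by
    rw [norm_sub_sq_real, real_inner_smul_right, hs_abs, hvwabs, norm_smul,
      Real.norm_eq_abs, hv, hw]
    have : |s| = 1 := by rw [hsdef]; split <;> norm_num
    rw [this]
    ring
  have hkey : ‖v - s • w‖ ^ 2 * γ ^ 2 ≤ 8 * t ^ 2 := by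
    have h1 : ‖v - s • w‖ ^ 2 ≤ 2 * S := by
      rw [hnorm2]
      nlinarith [sq_abs (c i0), hS1, mul_nonneg (sub_nonneg.mpr hci0) (abs_nonneg (c i0))]
    nlinarith [sq_nonneg γ]
  -- finish
  have hK : ((2:ℝ) ^ ((3:ℝ)/2)) ^ 2 = 8 := by
    rw [← Real.rpow_natCast ((2:ℝ) ^ ((3:ℝ)/2)) 2, ← Real.rpow_mul (by norm_num)]
    norm_num
  have hK0 : (0:ℝ) ≤ 2 ^ ((3:ℝ)/2) := Real.rpow_nonneg (by norm_num) _
  have hRHS0 : 0 ≤ 2 ^ ((3:ℝ)/2) * t / γ := by positivity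
  have hsq : ‖v - s • w‖ ^ 2 ≤ (2 ^ ((3:ℝ)/2) * t / γ) ^ 2 := by
    rw [div_pow, mul_pow, hK]
    rw [le_div_iff₀ (by positivity)]
    linarith [hkey]
  calc ‖v - s • w‖ = Real.sqrt (‖v - s • w‖ ^ 2) := by
        rw [Real.sqrt_sq (norm_nonneg _)]
    _ ≤ Real.sqrt ((2 ^ ((3:ℝ)/2) * t / γ) ^ 2) := Real.sqrt_le_sqrt hsq
    _ = 2 ^ ((3:ℝ)/2) * t / γ := Real.sqrt_sq hRHS0
end
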